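/- Let (B_n)_{n≥1} be a sequence of subsets of ℝ² such that each B_n is a finite union of pairwise disjoint closed axis-parallel squares of common side length d_n, B_{n+1} ⊆ interior(B_n) for every n, and d_n → 0 as n → ∞; set B = ⋂_{n≥1} B_n (a closed set). Then the stopping map Φ is discontinuous at every f ∈ C([0,1],ℝ²) with τ(f) < 1 and Φ(f) ≠ f: there is a sequence g_n ∈ C([0,1],ℝ²) with sup_{t∈[0,1]}‖g_n(t)−f(t)‖ → 0 and Φ(g_n) = g_n for all n, so Φ(g_n) → f ≠ Φ(f). -/

import Mathlib

open Filter Topology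

noncomputable section

set_option maxHeartbeats 1000000
set_option linter.unusedSectionVars false
set_option linter.unusedVariables false

/-- The closed axis-parallel square `[a, a+d] × [b, b+d]` in `ℝ²`. -/
def closedSquare (a b d : ℝ) : Set (EuclideanSpace ℝ (Fin 2)) :=
  {x | x 0 ∈ Set.Icc a (a + d) ∧ x 1 ∈ Set.Icc b (b + d)}

/-- `S` is a finite union of pairwise disjoint closed axis-parallel squares of common
side length `d`. -/
def IsSquareUnion (S : Set (EuclideanSpace ℝ (Fin 2))) (d : ℝ) : Prop :=
  ∃ c : Finset (ℝ × ℝ),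
    (S = ⋃ p ∈ c, closedSquare p.1 p.2 d) ∧
    (c : Set (ℝ × ℝ)).Pairwise fun p q =>
      Disjoint (closedSquare p.1 p.2 d) (closedSquare q.1 q.2 d)

/-- The hitting-time functional: `τ(f) = min(inf {t ∈ [0,1] : f t ∈ B}, 1)`,
with the convention `inf ∅ = +∞` (realized by adjoining `1` to the set). -/
def hitTime (B : Set (EuclideanSpace ℝ (Fin 2)))
    (f : C(unitInterval, EuclideanSpace ℝ (Fin 2))) : ℝ :=
  sInf ({t : ℝ | ∃ ht : t ∈ Set.Icc (0 : ℝ) 1, f ⟨t, ht⟩ ∈ B} ∪ {1})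

/-- The stopping map `Φ(f)(t) = f(min(t, τ(f)))`. -/
def stopMap (B : Set (EuclideanSpace ℝ (Fin 2)))
    (f : C(unitInterval, EuclideanSpace ℝ (Fin 2))) :
    C(unitInterval, EuclideanSpace ℝ (Fin 2)) :=
  ⟨fun t => f (Set.projIcc (0 : ℝ) 1 zero_le_one (min t.1 (hitTime B f))),
    f.continuous.comp (continuous_projIcc.comp
      (continuous_subtype_val.min continuous_const))⟩

/- ############ Auxiliary machinery ############ -/

abbrev E := EuclideanSpace ℝ (Fin 2)

namespace SP

lemma norm_eq2 (x : E) : ‖x‖ = Real.sqrt (x 0 ^ 2 + x 1 ^ 2) := by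
  rw [EuclideanSpace.norm_eq]; simp [Fin.sum_univ_two, Real.norm_eq_abs, sq_abs]

lemma coord0_le_norm (x : E) : |x 0| ≤ ‖x‖ := by
  rw [norm_eq2, show |x 0| = Real.sqrt (x 0 ^ 2) by rw [Real.sqrt_sq_eq_abs]]
  exact Real.sqrt_le_sqrt (by nlinarith [sq_nonneg (x 1)])

lemma coord1_le_norm (x : E) : |x 1| ≤ ‖x‖ := by
  rw [norm_eq2, show |x 1| = Real.sqrt (x 1 ^ 2) by rw [Real.sqrt_sq_eq_abs]]
  exact Real.sqrt_le_sqrt (by nlinarith [sq_nonneg (x 0)])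

lemma norm_le_coords (x : E) : ‖x‖ ≤ |x 0| + |x 1| := by
  have h : |x 0| + |x 1| = Real.sqrt ((|x 0| + |x 1|) ^ 2) := by
    rw [Real.sqrt_sq (by positivity)]
  rw [norm_eq2, h]
  apply Real.sqrt_le_sqrt
  nlinarith [sq_abs (x 0), sq_abs (x 1), mul_nonneg (abs_nonneg (x 0)) (abs_nonneg (x 1))]

/-- ℓ∞ distance from the center of the square. -/
def rad (a b d : ℝ) (x : E) : ℝ := max |x 0 - (a + d/2)| |x 1 - (b + d/2)|

lemma rad_nonneg (a b d : ℝ) (x : E) : 0 ≤ rad a b d x :=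
  le_trans (abs_nonneg _) (le_max_left _ _)

lemma mem_sq_iff_rad {a b d : ℝ} {x : E} :
    x ∈ closedSquare a b d ↔ rad a b d x ≤ d/2 := by
  simp only [closedSquare, Set.mem_setOf_eq, Set.mem_Icc, rad, max_le_iff, abs_sub_le_iff]
  constructor <;> intro h
  · obtain ⟨⟨h1, h2⟩, h3, h4⟩ := h
    exact ⟨⟨by linarith, by linarith⟩, by linarith, by linarith⟩
  · obtain ⟨⟨h1, h2⟩, h3, h4⟩ := h
    exact ⟨⟨by linarith, by linarith⟩, by linarith, by linarith⟩

def openSquare (a b d : ℝ) : Set E :=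
  {x | x 0 ∈ Set.Ioo a (a + d) ∧ x 1 ∈ Set.Ioo b (b + d)}

lemma mem_osq_iff_rad {a b d : ℝ} {x : E} :
    x ∈ openSquare a b d ↔ rad a b d x < d/2 := by
  simp only [openSquare, Set.mem_setOf_eq, Set.mem_Ioo, rad, max_lt_iff, abs_sub_lt_iff]
  constructor <;> intro h
  · obtain ⟨⟨h1, h2⟩, h3, h4⟩ := h
    exact ⟨⟨by linarith, by linarith⟩, by linarith, by linarith⟩
  · obtain ⟨⟨h1, h2⟩, h3, h4⟩ := h
    exact ⟨⟨by linarith, by linarith⟩, by linarith, by linarith⟩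

lemma isOpen_osq (a b d : ℝ) : IsOpen (openSquare a b d) := by
  have : openSquare a b d =
      (fun x : E => x 0) ⁻¹' Set.Ioo a (a+d) ∩ (fun x : E => x 1) ⁻¹' Set.Ioo b (b+d) := by
    ext x; simp only [openSquare, Set.mem_setOf_eq, Set.mem_inter_iff, Set.mem_preimage]
  rw [this]
  exact ((isOpen_Ioo).preimage (PiLp.continuous_apply 2 (fun _ : Fin 2 => ℝ) 0)).inter ((isOpen_Ioo).preimage (PiLp.continuous_apply 2 (fun _ : Fin 2 => ℝ) 1))

lemma isClosed_sq (a b d : ℝ) : IsClosed (closedSquare a b d) := by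
  have : closedSquare a b d =
      (fun x : E => x 0) ⁻¹' Set.Icc a (a+d) ∩ (fun x : E => x 1) ⁻¹' Set.Icc b (b+d) := by
    ext x; simp only [closedSquare, Set.mem_setOf_eq, Set.mem_inter_iff, Set.mem_preimage]
  rw [this]
  exact ((isClosed_Icc).preimage (PiLp.continuous_apply 2 (fun _ : Fin 2 => ℝ) 0)).inter ((isClosed_Icc).preimage (PiLp.continuous_apply 2 (fun _ : Fin 2 => ℝ) 1))

lemma osq_subset (a b d : ℝ) : openSquare a b d ⊆ closedSquare a b d := by
  intro x hx
  exact mem_sq_iff_rad.2 (le_of_lt (mem_osq_iff_rad.1 hx))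

lemma sq_diam {a b d : ℝ} {x y : E} (hx : x ∈ closedSquare a b d)
    (hy : y ∈ closedSquare a b d) : ‖x - y‖ ≤ 2 * d := by
  obtain ⟨⟨h1, h2⟩, h3, h4⟩ := hx
  obtain ⟨⟨h5, h6⟩, h7, h8⟩ := hy
  calc ‖x - y‖ ≤ |(x - y) 0| + |(x - y) 1| := norm_le_coords _
  _ ≤ 2 * d := by
      simp only [PiLp.sub_apply]
      have a1 : |x 0 - y 0| ≤ d := abs_le.2 ⟨by linarith, by linarith⟩
      have a2 : |x 1 - y 1| ≤ d := abs_le.2 ⟨by linarith, by linarith⟩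
      linarith

lemma interior_sq (a b d : ℝ) : interior (closedSquare a b d) = openSquare a b d := by
  apply le_antisymm
  · intro x hx
    obtain ⟨ε, hε, hball⟩ := Metric.mem_nhds_iff.1 (mem_interior_iff_mem_nhds.1 hx)
    have pert : ∀ (i : Fin 2) (t : ℝ), |t| < ε →
        x + t • EuclideanSpace.single i (1:ℝ) ∈ closedSquare a b d := by
      intro i t ht
      apply hball
      rw [Metric.mem_ball, dist_eq_norm, add_sub_cancel_left, norm_smul,
        EuclideanSpace.norm_single, norm_one, mul_one, Real.norm_eq_abs]
      exact ht
    have e0 : ∀ t : ℝ, (x + t • EuclideanSpace.single (0 : Fin 2) (1:ℝ)) 0 = x 0 + t := by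
      intro t; simp [EuclideanSpace.single_apply]
    have e1 : ∀ t : ℝ, (x + t • EuclideanSpace.single (1 : Fin 2) (1:ℝ)) 1 = x 1 + t := by
      intro t; simp [EuclideanSpace.single_apply]
    have habs : |ε/2| < ε := by rw [abs_of_pos (by linarith)]; linarith
    have habs' : |-(ε/2)| < ε := by rw [abs_neg, abs_of_pos (by linarith)]; linarith
    have m1 := (pert 0 (ε/2) habs).1
    have m2 := (pert 0 (-(ε/2)) habs').1
    have m3 := (pert 1 (ε/2) habs).2
    have m4 := (pert 1 (-(ε/2)) habs').2
    rw [e0] at m1 m2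
    rw [e1] at m3 m4
    simp only [Set.mem_Icc] at m1 m2 m3 m4
    exact ⟨⟨by linarith [m2.1], by linarith [m1.2]⟩, by linarith [m4.1], by linarith [m3.2]⟩
  · exact interior_maximal (osq_subset a b d) (isOpen_osq a b d)

def mk2 (u v : ℝ) : E := WithLp.toLp 2 ![u, v]
@[simp] lemma mk2_zero (u v : ℝ) : mk2 u v 0 = u := rfl
@[simp] lemma mk2_one (u v : ℝ) : mk2 u v 1 = v := rfl

/-- piecewise-linear parametrization of the boundary of the square, `u ∈ [0, 4d]`. -/
def bpath (a b d : ℝ) (u : ℝ) : E :=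
  mk2 (a + max 0 (min d (min u (3*d - u)))) (b + max 0 (min d (min (u - d) (4*d - u))))

lemma clamp_mem {d w : ℝ} (hd : 0 ≤ d) : max 0 (min d w) ∈ Set.Icc 0 d :=
  ⟨le_max_left _ _, max_le hd (min_le_left _ _)⟩

lemma bpath_mem_sq {a b d : ℝ} (hd : 0 ≤ d) (u : ℝ) :
    bpath a b d u ∈ closedSquare a b d := by
  constructor
  · have := clamp_mem (d := d) (w := min u (3*d - u)) hd
    simp only [bpath, mk2_zero, Set.mem_Icc] at *
    constructor <;> linarith [this.1, this.2]
  · have := clamp_mem (d := d) (w := min (u - d) (4*d - u)) hd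
    simp only [bpath, mk2_one, Set.mem_Icc] at *
    constructor <;> linarith [this.1, this.2]

lemma bpath_not_mem_osq {a b d : ℝ} (hd : 0 < d) {u : ℝ} (hu : u ∈ Set.Icc 0 (4*d)) :
    bpath a b d u ∉ openSquare a b d := by
  obtain ⟨hu0, hu4⟩ := hu
  intro hmem
  obtain ⟨⟨hx1, hx2⟩, hy1, hy2⟩ := hmem
  simp only [bpath, mk2_zero, mk2_one] at hx1 hx2 hy1 hy2
  rcases le_or_gt u d with h1 | h1
  · -- y coord = b
    have : min (u - d) (4*d - u) ≤ 0 := le_trans (min_le_left _ _) (by linarith)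
    have : max 0 (min d (min (u - d) (4*d - u))) = 0 := by
      rw [max_eq_left]; exact le_trans (min_le_right _ _) this
    simp [this] at hy1
  · rcases le_or_gt u (2*d) with h2 | h2
    · -- x coord = a + d
      have hge : d ≤ min u (3*d - u) := le_min (le_of_lt h1) (by linarith)
      have : max 0 (min d (min u (3*d - u))) = d := by
        rw [min_eq_left hge, max_eq_right hd.le]
      simp [this] at hx2
    · rcases le_or_gt u (3*d) with h3 | h3
      · -- y coord = b + d
        have hge : d ≤ min (u - d) (4*d - u) := le_min (by linarith) (by linarith)
        have : max 0 (min d (min (u - d) (4*d - u))) = d := by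
          rw [min_eq_left hge, max_eq_right hd.le]
        simp [this] at hy2
      · -- x coord = a
        have : min u (3*d - u) ≤ 0 := le_trans (min_le_right _ _) (by linarith)
        have : max 0 (min d (min u (3*d - u))) = 0 := by
          rw [max_eq_left]; exact le_trans (min_le_right _ _) this
        simp [this] at hx1

lemma clamp_lip (d : ℝ) (w w' : ℝ) : |max 0 (min d w) - max 0 (min d w')| ≤ |w - w'| := by
  calc |max 0 (min d w) - max 0 (min d w')|
      ≤ max |(0:ℝ) - 0| |min d w - min d w'| := abs_max_sub_max_le_max _ _ _ _
    _ ≤ |w - w'| := by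
        apply max_le
        · simp [abs_nonneg]
        · calc |min d w - min d w'| ≤ max |d - d| |w - w'| := abs_min_sub_min_le_max _ _ _ _
            _ ≤ |w - w'| := by apply max_le <;> simp [abs_nonneg]

lemma bpath_lip (a b d : ℝ) (u v : ℝ) : ‖bpath a b d u - bpath a b d v‖ ≤ 2 * |u - v| := by
  have h0 : |(bpath a b d u - bpath a b d v) 0| ≤ |u - v| := by
    simp only [PiLp.sub_apply, bpath, mk2_zero, add_sub_add_left_eq_sub]
    calc |max 0 (min d (min u (3*d - u))) - max 0 (min d (min v (3*d - v)))|
        ≤ |min u (3*d - u) - min v (3*d - v)| := clamp_lip _ _ _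
      _ ≤ max |u - v| |(3*d - u) - (3*d - v)| := abs_min_sub_min_le_max _ _ _ _
      _ ≤ |u - v| := by
          apply max_le le_rfl
          rw [show (3*d - u) - (3*d - v) = -(u - v) by ring, abs_neg]
  have h1 : |(bpath a b d u - bpath a b d v) 1| ≤ |u - v| := by
    simp only [PiLp.sub_apply, bpath, mk2_one, add_sub_add_left_eq_sub]
    calc |max 0 (min d (min (u - d) (4*d - u))) - max 0 (min d (min (v - d) (4*d - v)))|
        ≤ |min (u - d) (4*d - u) - min (v - d) (4*d - v)| := clamp_lip _ _ _
      _ ≤ max |(u - d) - (v - d)| |(4*d - u) - (4*d - v)| := abs_min_sub_min_le_max _ _ _ _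
      _ ≤ |u - v| := by
          apply max_le
          · rw [show (u - d) - (v - d) = u - v by ring]
          · rw [show (4*d - u) - (4*d - v) = -(u - v) by ring, abs_neg]
  calc ‖bpath a b d u - bpath a b d v‖ ≤ _ := norm_le_coords _
    _ ≤ 2 * |u - v| := by linarith

lemma bpath_cont (a b d : ℝ) : Continuous (bpath a b d) := by
  apply LipschitzWith.continuous (K := 2)
  apply LipschitzWith.of_dist_le_mul
  intro u v
  rw [dist_eq_norm, dist_eq_norm]
  simpa using bpath_lip a b d u v

lemma mk2_eta (x : E) : mk2 (x 0) (x 1) = x := by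
  ext i
  fin_cases i <;> rfl

lemma mk2_eq_mk2 {u v u' v' : ℝ} (h1 : u = u') (h2 : v = v') : mk2 u v = mk2 u' v' := by
  subst h1; subst h2; rfl

lemma bpath_surj {a b d : ℝ} (hd : 0 < d) {x : E}
    (hx : x ∈ closedSquare a b d) (hx' : x ∉ openSquare a b d) :
    ∃ u ∈ Set.Icc 0 (4*d), bpath a b d u = x := by
  obtain ⟨⟨h1, h2⟩, h3, h4⟩ := hx
  have hcases : x 0 = a ∨ x 0 = a + d ∨ x 1 = b ∨ x 1 = b + d := by
    by_contra hc
    push_neg at hc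
    obtain ⟨c1, c2, c3, c4⟩ := hc
    exact hx' ⟨⟨lt_of_le_of_ne h1 (Ne.symm c1), lt_of_le_of_ne h2 c2⟩,
      lt_of_le_of_ne h3 (Ne.symm c3), lt_of_le_of_ne h4 c4⟩
  rw [← mk2_eta x]
  rcases hcases with hc | hc | hc | hc
  · -- x 0 = a : left side, u ∈ [3d, 4d]
    refine ⟨4*d - (x 1 - b), ⟨by linarith, by linarith⟩, mk2_eq_mk2 ?_ ?_⟩
    · rw [min_eq_right (by linarith : (3*d - (4*d - (x 1 - b))) ≤ (4*d - (x 1 - b))),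
        min_eq_right (by linarith), max_eq_left (by linarith), hc]
      ring
    · rw [min_eq_right (by linarith : (4*d - (4*d - (x 1 - b))) ≤ (4*d - (x 1 - b)) - d),
        min_eq_right (by linarith), max_eq_right (by linarith)]
      ring
  · -- x 0 = a + d : right side, u ∈ [d, 2d]
    refine ⟨d + (x 1 - b), ⟨by linarith, by linarith⟩, mk2_eq_mk2 ?_ ?_⟩
    · rw [min_eq_left (le_min (by linarith) (by linarith) :
        d ≤ min (d + (x 1 - b)) (3*d - (d + (x 1 - b)))), max_eq_right (by linarith), hc]
    · rw [min_eq_left (by linarith : (d + (x 1 - b)) - d ≤ 4*d - (d + (x 1 - b))),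
        min_eq_right (by linarith), max_eq_right (by linarith)]
      ring
  · -- x 1 = b : bottom side, u ∈ [0, d]
    refine ⟨x 0 - a, ⟨by linarith, by linarith⟩, mk2_eq_mk2 ?_ ?_⟩
    · rw [min_eq_left (by linarith : x 0 - a ≤ 3*d - (x 0 - a)),
        min_eq_right (by linarith), max_eq_right (by linarith)]
      ring
    · rw [max_eq_left (le_trans (min_le_right _ _)
        (le_trans (min_le_left _ _) (by linarith : (x 0 - a) - d ≤ 0))), hc]
      ring
  · -- x 1 = b + d : top side, u ∈ [2d, 3d]
    refine ⟨3*d - (x 0 - a), ⟨by linarith, by linarith⟩, mk2_eq_mk2 ?_ ?_⟩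
    · rw [min_eq_right (by linarith : 3*d - (3*d - (x 0 - a)) ≤ 3*d - (x 0 - a)),
        min_eq_right (by linarith), max_eq_right (by linarith)]
      ring
    · rw [min_eq_left (le_min (by linarith) (by linarith) :
        d ≤ min ((3*d - (x 0 - a)) - d) (4*d - (3*d - (x 0 - a)))),
        max_eq_right (by linarith), hc]

def ctr (a b d : ℝ) : E := mk2 (a + d/2) (b + d/2)

lemma rad_eq_sub (a b d : ℝ) (z : E) :
    rad a b d z = max |(z - ctr a b d) 0| |(z - ctr a b d) 1| := by
  simp [rad, ctr, PiLp.sub_apply]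

lemma rad_lip_inf (a b d : ℝ) (z w : E) :
    |rad a b d z - rad a b d w| ≤ max |(z - w) 0| |(z - w) 1| := by
  unfold rad
  refine le_trans (abs_max_sub_max_le_max _ _ _ _) (max_le_max ?_ ?_) <;>
  · rw [PiLp.sub_apply]
    refine le_trans (abs_abs_sub_abs_le_abs_sub _ _) (le_of_eq ?_)
    congr 1
    ring

lemma rad_lip (a b d : ℝ) (z w : E) : |rad a b d z - rad a b d w| ≤ ‖z - w‖ :=
  le_trans (rad_lip_inf a b d z w) (max_le (coord0_le_norm _) (coord1_le_norm _))

lemma rad_continuous (a b d : ℝ) : Continuous (rad a b d) := by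
  apply Continuous.max
  · exact (((PiLp.continuous_apply 2 (fun _ : Fin 2 => ℝ) (0 : Fin 2)).sub continuous_const)).abs
  · exact (((PiLp.continuous_apply 2 (fun _ : Fin 2 => ℝ) (1 : Fin 2)).sub continuous_const)).abs

def proj (a b d : ℝ) (z : E) : E := ctr a b d + (d/2 / rad a b d z) • (z - ctr a b d)

lemma norm_sub_ctr_le (a b d : ℝ) (z : E) : ‖z - ctr a b d‖ ≤ 2 * rad a b d z := by
  calc ‖z - ctr a b d‖ ≤ |(z - ctr a b d) 0| + |(z - ctr a b d) 1| := norm_le_coords _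
    _ ≤ 2 * rad a b d z := by
        rw [rad_eq_sub]
        have := le_max_left |(z - ctr a b d) 0| |(z - ctr a b d) 1|
        have := le_max_right |(z - ctr a b d) 0| |(z - ctr a b d) 1|
        linarith

lemma rad_proj {a b d : ℝ} (hd : 0 < d) {z : E} (hz : 0 < rad a b d z) :
    rad a b d (proj a b d z) = d/2 := by
  have hnn : 0 ≤ d/2 / rad a b d z := by positivity
  rw [rad_eq_sub]
  have he : proj a b d z - ctr a b d = (d/2 / rad a b d z) • (z - ctr a b d) := by
    rw [proj]; abel
  rw [he]
  simp only [PiLp.smul_apply, smul_eq_mul, abs_mul, abs_of_nonneg hnn]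
  rw [← mul_max_of_nonneg _ _ hnn, ← rad_eq_sub]
  field_simp

lemma proj_self {a b d : ℝ} (hd : 0 < d) {z : E} (hz : rad a b d z = d/2) :
    proj a b d z = z := by
  rw [proj, hz]
  rw [div_self (by linarith), one_smul]
  abel

lemma proj_lip {a b d : ℝ} (hd : 0 < d) {z w : E}
    (hz : d/4 ≤ rad a b d z) (hw : d/4 ≤ rad a b d w) :
    ‖proj a b d z - proj a b d w‖ ≤ 6 * ‖z - w‖ := by
  set mz := rad a b d z with hmz
  set mw := rad a b d w with hmw
  have hmz0 : 0 < mz := lt_of_lt_of_le (by linarith) hz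
  have hmw0 : 0 < mw := lt_of_lt_of_le (by linarith) hw
  have key : proj a b d z - proj a b d w =
      (d/2 / mz) • (z - w) + ((d/2 / mz) - (d/2 / mw)) • (w - ctr a b d) := by
    rw [proj, proj]
    module
  rw [key]
  have hq : d/2 / mz ≤ 2 := by rw [div_le_iff₀ hmz0]; linarith
  have h1 : ‖(d/2 / mz) • (z - w)‖ ≤ 2 * ‖z - w‖ := by
    rw [norm_smul, Real.norm_eq_abs, abs_of_nonneg (by positivity)]
    have := norm_nonneg (z - w)
    nlinarith
  have h2 : ‖((d/2 / mz) - (d/2 / mw)) • (w - ctr a b d)‖ ≤ 4 * ‖z - w‖ := by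
    rw [norm_smul, Real.norm_eq_abs]
    have hb : |mw - mz| ≤ ‖z - w‖ := by
      rw [abs_sub_comm]
      exact rad_lip a b d z w
    have hdiff : |(d/2 / mz) - (d/2 / mw)| ≤ (d/2) * ‖z - w‖ / (mz * mw) := by
      rw [div_sub_div _ _ (ne_of_gt hmz0) (ne_of_gt hmw0), abs_div,
        abs_of_pos (by positivity : (0:ℝ) < mz * mw),
        show d/2 * mw - mz * (d/2) = d/2 * (mw - mz) by ring, abs_mul,
        abs_of_nonneg (by linarith : (0:ℝ) ≤ d/2)]
      gcongr
    have hc : ‖w - ctr a b d‖ ≤ 2 * mw := norm_sub_ctr_le a b d w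
    calc |(d/2 / mz) - (d/2 / mw)| * ‖w - ctr a b d‖
        ≤ ((d/2) * ‖z - w‖ / (mz * mw)) * (2 * mw) := by
          apply mul_le_mul hdiff hc (norm_nonneg _) (by positivity)
      _ = d * ‖z - w‖ / mz := by field_simp
      _ ≤ 4 * ‖z - w‖ := by
          rw [div_le_iff₀ hmz0]
          nlinarith [norm_nonneg (z - w)]
  calc ‖_ + _‖ ≤ _ := norm_add_le _ _
    _ ≤ 6 * ‖z - w‖ := by linarith

/-- `x` lies on the boundary of the square. -/
def onBdry (a b d : ℝ) (x : E) : Prop :=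
  x ∈ closedSquare a b d ∧ x ∉ openSquare a b d

lemma onBdry_iff_rad {a b d : ℝ} {x : E} : onBdry a b d x ↔ rad a b d x = d/2 := by
  rw [onBdry, mem_sq_iff_rad, mem_osq_iff_rad, not_lt]
  constructor
  · exact fun h => le_antisymm h.1 h.2
  · exact fun h => ⟨le_of_eq h, ge_of_eq h⟩

open Classical in
/-- A boundary parameter for `x`. -/
def uOf (a b d : ℝ) (x : E) : ℝ :=
  if h : ∃ u ∈ Set.Icc 0 (4*d), bpath a b d u = x then h.choose else 0

lemma uOf_spec {a b d : ℝ} (hd : 0 < d) {x : E} (hx : onBdry a b d x) :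
    uOf a b d x ∈ Set.Icc 0 (4*d) ∧ bpath a b d (uOf a b d x) = x := by
  have h : ∃ u ∈ Set.Icc 0 (4*d), bpath a b d u = x := bpath_surj hd hx.1 hx.2
  classical
  rw [uOf]
  rw [dif_pos h]
  exact ⟨h.choose_spec.1, h.choose_spec.2⟩

/-- A continuous path on the boundary of the square from `x` to `y`. -/
def pathAB (a b d : ℝ) (x y : E) (s : ℝ) : E :=
  if max |(x - y) 0| |(x - y) 1| ≤ d/4 then proj a b d (x + s • (y - x))
  else bpath a b d ((1-s) * uOf a b d x + s * uOf a b d y)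

section PathAB
variable {a b d : ℝ} {x y : E} (hd : 0 < d) (hx : onBdry a b d x) (hy : onBdry a b d y)
include hd hx hy

omit hy in
lemma seg_rad (hcl : max |(x - y) 0| |(x - y) 1| ≤ d/4) {s : ℝ} (hs : s ∈ Set.Icc (0:ℝ) 1) :
    d/4 ≤ rad a b d (x + s • (y - x)) := by
  have hrx : rad a b d x = d/2 := onBdry_iff_rad.1 hx
  have hlip := rad_lip_inf a b d (x + s • (y - x)) x
  have he : (x + s • (y - x)) - x = s • (y - x) := by abel
  rw [he] at hlip
  have h0 : |(s • (y - x)) 0| = s * |(y - x) 0| := by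
    rw [PiLp.smul_apply, smul_eq_mul, abs_mul, abs_of_nonneg hs.1]
  have h1 : |(s • (y - x)) 1| = s * |(y - x) 1| := by
    rw [PiLp.smul_apply, smul_eq_mul, abs_mul, abs_of_nonneg hs.1]
  have hyx0 : |(y - x) 0| ≤ d/4 := by
    rw [show (y - x) = -(x - y) by abel, PiLp.neg_apply, abs_neg]
    exact le_trans (le_max_left _ _) hcl
  have hyx1 : |(y - x) 1| ≤ d/4 := by
    rw [show (y - x) = -(x - y) by abel, PiLp.neg_apply, abs_neg]
    exact le_trans (le_max_right _ _) hcl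
  have hmax : max |(s • (y - x)) 0| |(s • (y - x)) 1| ≤ d/4 := by
    rw [h0, h1]
    apply max_le <;> nlinarith [hs.1, hs.2]
  have habs := abs_le.1 hlip
  linarith [habs.1, habs.2]

omit hy in
lemma pathAB_zero : pathAB a b d x y 0 = x := by
  rw [pathAB]
  split_ifs with h
  · rw [zero_smul, add_zero]
    exact proj_self hd (onBdry_iff_rad.1 hx)
  · rw [show (1-(0:ℝ)) * uOf a b d x + 0 * uOf a b d y = uOf a b d x by ring]
    exact (uOf_spec hd hx).2

omit hx in
lemma pathAB_one : pathAB a b d x y 1 = y := by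
  rw [pathAB]
  split_ifs with h
  · rw [one_smul, show x + (y - x) = y by abel]
    exact proj_self hd (onBdry_iff_rad.1 hy)
  · rw [show (1-(1:ℝ)) * uOf a b d x + 1 * uOf a b d y = uOf a b d y by ring]
    exact (uOf_spec hd hy).2

lemma pathAB_onBdry {s : ℝ} (hs : s ∈ Set.Icc (0:ℝ) 1) :
    onBdry a b d (pathAB a b d x y s) := by
  rw [pathAB]
  split_ifs with h
  · exact onBdry_iff_rad.2 (rad_proj hd (lt_of_lt_of_le (by linarith) (seg_rad hd hx h hs)))
  · have hux := (uOf_spec hd hx).1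
    have huy := (uOf_spec hd hy).1
    have hu : (1-s) * uOf a b d x + s * uOf a b d y ∈ Set.Icc 0 (4*d) := by
      constructor
      · nlinarith [hux.1, huy.1, hs.1, hs.2]
      · nlinarith [hux.2, huy.2, hs.1, hs.2]
    exact ⟨bpath_mem_sq hd.le _, bpath_not_mem_osq hd hu⟩

omit hd hx hy in
lemma norm_le_max2 (z : E) : ‖z‖ ≤ 2 * max |z 0| |z 1| := by
  have := norm_le_coords z
  have := le_max_left |z 0| |z 1|
  have := le_max_right |z 0| |z 1|
  linarith

lemma pathAB_near_x {s : ℝ} (hs : s ∈ Set.Icc (0:ℝ) 1) :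
    ‖pathAB a b d x y s - x‖ ≤ 8 * ‖x - y‖ := by
  rw [pathAB]
  split_ifs with h
  · have hpx : proj a b d x = x := proj_self hd (onBdry_iff_rad.1 hx)
    have hrad : rad a b d x = d/2 := onBdry_iff_rad.1 hx
    calc ‖proj a b d (x + s • (y - x)) - x‖
        = ‖proj a b d (x + s • (y - x)) - proj a b d x‖ := by rw [hpx]
      _ ≤ 6 * ‖(x + s • (y - x)) - x‖ := proj_lip hd (seg_rad hd hx h hs) (by rw [hrad]; linarith)
      _ ≤ 8 * ‖x - y‖ := by
          rw [show (x + s • (y - x)) - x = s • (y - x) by abel, norm_smul,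
            Real.norm_eq_abs, abs_of_nonneg hs.1, show y - x = -(x - y) by abel, norm_neg]
          nlinarith [norm_nonneg (x - y), hs.1, hs.2]
  · push_neg at h
    have h1 : d/4 < ‖x - y‖ :=
      lt_of_lt_of_le h (max_le (coord0_le_norm _) (coord1_le_norm _))
    have h2 : ‖bpath a b d ((1-s) * uOf a b d x + s * uOf a b d y) - x‖ ≤ 2 * d := by
      have hb : onBdry a b d (bpath a b d ((1-s) * uOf a b d x + s * uOf a b d y)) := by
        have := pathAB_onBdry (x := x) (y := y) hd hx hy hs
        rw [pathAB, if_neg (not_le.2 h)] at this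
        exact this
      exact sq_diam hb.1 hx.1
    linarith

lemma pathAB_near_y {s : ℝ} (hs : s ∈ Set.Icc (0:ℝ) 1) :
    ‖pathAB a b d x y s - y‖ ≤ 8 * ‖x - y‖ := by
  rw [pathAB]
  split_ifs with h
  · have hpy : proj a b d y = y := proj_self hd (onBdry_iff_rad.1 hy)
    have hrad : rad a b d y = d/2 := onBdry_iff_rad.1 hy
    calc ‖proj a b d (x + s • (y - x)) - y‖
        = ‖proj a b d (x + s • (y - x)) - proj a b d y‖ := by rw [hpy]
      _ ≤ 6 * ‖(x + s • (y - x)) - y‖ := proj_lip hd (seg_rad hd hx h hs) (by rw [hrad]; linarith)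
      _ ≤ 8 * ‖x - y‖ := by
          rw [show (x + s • (y - x)) - y = (1 - s) • (x - y) by module, norm_smul,
            Real.norm_eq_abs, abs_of_nonneg (by linarith [hs.2])]
          nlinarith [norm_nonneg (x - y), hs.1, hs.2]
  · push_neg at h
    have h1 : d/4 < ‖x - y‖ :=
      lt_of_lt_of_le h (max_le (coord0_le_norm _) (coord1_le_norm _))
    have h2 : ‖bpath a b d ((1-s) * uOf a b d x + s * uOf a b d y) - y‖ ≤ 2 * d := by
      have hb : onBdry a b d (bpath a b d ((1-s) * uOf a b d x + s * uOf a b d y)) := by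
        have := pathAB_onBdry (x := x) (y := y) hd hx hy hs
        rw [pathAB, if_neg (not_le.2 h)] at this
        exact this
      exact sq_diam hb.1 hy.1
    linarith

lemma pathAB_lip {s s' : ℝ} (hs : s ∈ Set.Icc (0:ℝ) 1) (hs' : s' ∈ Set.Icc (0:ℝ) 1) :
    ‖pathAB a b d x y s - pathAB a b d x y s'‖ ≤ 8 * d * |s - s'| := by
  simp only [pathAB]
  split_ifs with h
  · have hseg : ‖(x + s • (y - x)) - (x + s' • (y - x))‖ = |s - s'| * ‖y - x‖ := by
      rw [show (x + s • (y - x)) - (x + s' • (y - x)) = (s - s') • (y - x) by module,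
        norm_smul, Real.norm_eq_abs]
    have hxy : ‖y - x‖ ≤ d/2 := by
      rw [show y - x = -(x - y) by abel, norm_neg]
      calc ‖x - y‖ ≤ 2 * max |(x - y) 0| |(x - y) 1| := norm_le_max2 _
        _ ≤ d/2 := by linarith
    calc ‖proj a b d (x + s • (y - x)) - proj a b d (x + s' • (y - x))‖
        ≤ 6 * ‖(x + s • (y - x)) - (x + s' • (y - x))‖ :=
          proj_lip hd (seg_rad hd hx h hs) (seg_rad hd hx h hs')
      _ ≤ 8 * d * |s - s'| := by
          rw [hseg]
          nlinarith [abs_nonneg (s - s'), norm_nonneg (y - x)]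
  · have hux := (uOf_spec hd hx).1
    have huy := (uOf_spec hd hy).1
    calc ‖bpath a b d ((1-s) * uOf a b d x + s * uOf a b d y) -
          bpath a b d ((1-s') * uOf a b d x + s' * uOf a b d y)‖
        ≤ 2 * |((1-s) * uOf a b d x + s * uOf a b d y) -
            ((1-s') * uOf a b d x + s' * uOf a b d y)| := bpath_lip _ _ _ _ _
      _ ≤ 8 * d * |s - s'| := by
          rw [show ((1-s) * uOf a b d x + s * uOf a b d y) -
            ((1-s') * uOf a b d x + s' * uOf a b d y)
            = (s - s') * (uOf a b d y - uOf a b d x) by ring, abs_mul]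
          have : |uOf a b d y - uOf a b d x| ≤ 4 * d := by
            rw [abs_le]
            constructor <;> [linarith [huy.1, hux.2]; linarith [huy.2, hux.1]]
          nlinarith [abs_nonneg (s - s'), abs_nonneg (uOf a b d y - uOf a b d x)]

lemma pathAB_contOn : ContinuousOn (pathAB a b d x y) (Set.Icc 0 1) := by
  intro s hs
  apply Metric.continuousWithinAt_iff.2
  intro ε hε
  refine ⟨ε / (8 * d + 1), by positivity, fun s' hs' hd' => ?_⟩
  rw [dist_eq_norm]
  calc ‖pathAB a b d x y s' - pathAB a b d x y s‖ ≤ 8 * d * |s' - s| :=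
        pathAB_lip hd hx hy hs' hs
    _ < ε := by
        rw [dist_eq_norm] at hd'
        have h8 : (0:ℝ) < 8 * d + 1 := by linarith
        have : |s' - s| < ε / (8 * d + 1) := by rwa [Real.norm_eq_abs] at hd'
        calc 8 * d * |s' - s| ≤ (8*d+1) * |s' - s| := by nlinarith [abs_nonneg (s' - s)]
          _ < (8*d+1) * (ε / (8 * d + 1)) := by
              apply mul_lt_mul_of_pos_left this h8
          _ = ε := by field_simp

end PathAB

section Construction
variable (c : Finset (ℝ × ℝ)) (d : ℝ) (f : C(unitInterval, E))

/-- the path, extended to `ℝ`. -/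
def Ff : ℝ → E := fun s => f (Set.projIcc 0 1 zero_le_one s)

lemma Ff_cont : Continuous (Ff f) := f.continuous.comp continuous_projIcc

lemma Ff_coe (t : unitInterval) : Ff f t = f t := by
  rw [Ff, Set.projIcc_val]

/-- union of the open squares. -/
def Oset : Set E := ⋃ p ∈ c, openSquare p.1 p.2 d

lemma isOpen_Oset : IsOpen (Oset c d) :=
  isOpen_biUnion fun p _ => isOpen_osq _ _ _

variable (hd : 0 < d)
  (hdisj : (c : Set (ℝ × ℝ)).Pairwise fun p q =>
    Disjoint (closedSquare p.1 p.2 d) (closedSquare q.1 q.2 d))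

/-- uniqueness of the square containing a point -/
lemma sq_unique (hdisj : (c : Set (ℝ × ℝ)).Pairwise fun p q =>
      Disjoint (closedSquare p.1 p.2 d) (closedSquare q.1 q.2 d))
    {p q : ℝ × ℝ} (hp : p ∈ c) (hq : q ∈ c) {z : E}
    (hzp : z ∈ closedSquare p.1 p.2 d) (hzq : z ∈ closedSquare q.1 q.2 d) : p = q := by
  by_contra hne
  exact Set.disjoint_left.1 (hdisj hp hq hne) hzp hzq

lemma interior_union_eq (hdisj : (c : Set (ℝ × ℝ)).Pairwise fun p q =>
      Disjoint (closedSquare p.1 p.2 d) (closedSquare q.1 q.2 d)) :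
    interior (⋃ p ∈ c, closedSquare p.1 p.2 d) = Oset c d := by
  apply le_antisymm
  · intro z hz
    have hzK : z ∈ ⋃ p ∈ c, closedSquare p.1 p.2 d := interior_subset hz
    rw [Set.mem_iUnion₂] at hzK
    obtain ⟨q, hq, hzq⟩ := hzK
    set Kother := ⋃ p ∈ (c.erase q), closedSquare p.1 p.2 d with hKo
    have hKoCl : IsClosed Kother :=
      Set.Finite.isClosed_biUnion (Finset.finite_toSet _) (fun p _ => isClosed_sq _ _ _)
    have hzKo : z ∉ Kother := by
      intro hmem
      rw [Set.mem_iUnion₂] at hmem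
      obtain ⟨p, hp, hzp⟩ := hmem
      exact (Finset.ne_of_mem_erase hp)
        (sq_unique c d hdisj (Finset.mem_of_mem_erase hp) hq hzp hzq)
    have hU : IsOpen (interior (⋃ p ∈ c, closedSquare p.1 p.2 d) ∩ Kotherᶜ) :=
      isOpen_interior.inter hKoCl.isOpen_compl
    have hsub : interior (⋃ p ∈ c, closedSquare p.1 p.2 d) ∩ Kotherᶜ ⊆
        closedSquare q.1 q.2 d := by
      intro w ⟨hw1, hw2⟩
      have : w ∈ ⋃ p ∈ c, closedSquare p.1 p.2 d := interior_subset hw1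
      rw [Set.mem_iUnion₂] at this
      obtain ⟨p, hp, hwp⟩ := this
      rcases eq_or_ne p q with rfl | hne
      · exact hwp
      · exact absurd (Set.mem_iUnion₂.2 ⟨p, Finset.mem_erase.2 ⟨hne, hp⟩, hwp⟩) hw2
    have : z ∈ interior (closedSquare q.1 q.2 d) :=
      interior_maximal hsub hU ⟨hz, hzKo⟩
    rw [interior_sq] at this
    exact Set.mem_iUnion₂.2 ⟨q, hq, this⟩
  · apply interior_maximal ?_ (isOpen_Oset c d)
    exact Set.iUnion₂_mono fun p hp => osq_subset _ _ _

open Classical in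
/-- the square whose open interior contains `F t` (junk otherwise) -/
def pt (t : ℝ) : ℝ × ℝ :=
  if h : ∃ p ∈ c, Ff f t ∈ openSquare p.1 p.2 d then h.choose else (0, 0)

lemma pt_spec {t : ℝ} (ht : Ff f t ∈ Oset c d) :
    pt c d f t ∈ c ∧ Ff f t ∈ openSquare (pt c d f t).1 (pt c d f t).2 d := by
  classical
  have h : ∃ p ∈ c, Ff f t ∈ openSquare p.1 p.2 d := by
    rw [Oset, Set.mem_iUnion₂] at ht
    exact ⟨ht.choose, ht.choose_spec.1, ht.choose_spec.2⟩
  rw [pt, dif_pos h]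
  exact ⟨h.choose_spec.1, h.choose_spec.2⟩

/-- set of times before `t` where the path is not in the open square of `t` -/
def Aset (t : ℝ) : Set ℝ :=
  {s | s ≤ t ∧ Ff f s ∉ openSquare (pt c d f t).1 (pt c d f t).2 d} ∪ {-1}

def Bset (t : ℝ) : Set ℝ :=
  {s | t ≤ s ∧ Ff f s ∉ openSquare (pt c d f t).1 (pt c d f t).2 d} ∪ {2}

def al (t : ℝ) : ℝ := sSup (Aset c d f t)
def be (t : ℝ) : ℝ := sInf (Bset c d f t)

lemma Aset_closed (t : ℝ) : IsClosed (Aset c d f t) := by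
  apply IsClosed.union
  · exact (isClosed_Iic.preimage continuous_id).inter
      (((isOpen_osq _ _ _).preimage (Ff_cont f)).isClosed_compl)
  · exact isClosed_singleton

lemma Bset_closed (t : ℝ) : IsClosed (Bset c d f t) := by
  apply IsClosed.union
  · exact (isClosed_Ici.preimage continuous_id).inter
      (((isOpen_osq _ _ _).preimage (Ff_cont f)).isClosed_compl)
  · exact isClosed_singleton

lemma Aset_ne (t : ℝ) : (Aset c d f t).Nonempty := ⟨-1, Or.inr rfl⟩
lemma Bset_ne (t : ℝ) : (Bset c d f t).Nonempty := ⟨2, Or.inr rfl⟩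

lemma Aset_bdd (t : ℝ) : BddAbove (Aset c d f t) := by
  refine ⟨max t (-1), fun s hs => ?_⟩
  rcases hs with ⟨h1, _⟩ | h
  · exact le_max_of_le_left h1
  · rw [Set.mem_singleton_iff] at h; rw [h]; exact le_max_right _ _

lemma Bset_bdd (t : ℝ) : BddBelow (Bset c d f t) := by
  refine ⟨min t 2, fun s hs => ?_⟩
  rcases hs with ⟨h1, _⟩ | h
  · exact min_le_of_left_le h1
  · rw [Set.mem_singleton_iff] at h; rw [h]; exact min_le_right _ _

lemma al_mem (t : ℝ) : al c d f t ∈ Aset c d f t :=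
  (Aset_closed c d f t).csSup_mem (Aset_ne c d f t) (Aset_bdd c d f t)

lemma be_mem (t : ℝ) : be c d f t ∈ Bset c d f t :=
  (Bset_closed c d f t).csInf_mem (Bset_ne c d f t) (Bset_bdd c d f t)

lemma al_ge (t : ℝ) : -1 ≤ al c d f t :=
  le_csSup (Aset_bdd c d f t) (Or.inr rfl)

lemma be_le (t : ℝ) : be c d f t ≤ 2 :=
  csInf_le (Bset_bdd c d f t) (Or.inr rfl)

lemma nbhd_in_osq {t : ℝ} (ht : Ff f t ∈ Oset c d) :
    ∃ δ > 0, ∀ s : ℝ, |s - t| < δ →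
      Ff f s ∈ openSquare (pt c d f t).1 (pt c d f t).2 d := by
  obtain ⟨hpc, hto⟩ := pt_spec c d f ht
  have hnh : (Ff f) ⁻¹' (openSquare (pt c d f t).1 (pt c d f t).2 d) ∈ 𝓝 t :=
    (Ff_cont f).continuousAt.preimage_mem_nhds ((isOpen_osq _ _ _).mem_nhds hto)
  obtain ⟨δ, hδ, hball⟩ := Metric.mem_nhds_iff.1 hnh
  exact ⟨δ, hδ, fun s hs => hball (by rwa [Metric.mem_ball, Real.dist_eq])⟩

lemma al_lt {t : ℝ} (ht : Ff f t ∈ Oset c d) (ht1 : -1 < t) : al c d f t < t := by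
  obtain ⟨δ, hδ, hball⟩ := nbhd_in_osq c d f ht
  have : al c d f t ≤ max (t - δ/2) (-1) := by
    apply csSup_le (Aset_ne c d f t)
    intro s hs
    rcases hs with ⟨h1, h2⟩ | h
    · refine le_max_of_le_left ?_
      by_contra hcon
      push_neg at hcon
      exact h2 (hball s (by rw [abs_sub_lt_iff]; constructor <;> linarith))
    · rw [Set.mem_singleton_iff] at h; rw [h]; exact le_max_right _ _
  exact lt_of_le_of_lt this (max_lt (by linarith) ht1)

lemma be_gt {t : ℝ} (ht : Ff f t ∈ Oset c d) (ht2 : t < 2) : t < be c d f t := by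
  obtain ⟨δ, hδ, hball⟩ := nbhd_in_osq c d f ht
  have : min (t + δ/2) 2 ≤ be c d f t := by
    apply le_csInf (Bset_ne c d f t)
    intro s hs
    rcases hs with ⟨h1, h2⟩ | h
    · refine min_le_of_left_le ?_
      by_contra hcon
      push_neg at hcon
      exact h2 (hball s (by rw [abs_sub_lt_iff]; constructor <;> linarith))
    · rw [Set.mem_singleton_iff] at h; rw [h]; exact min_le_right _ _
  exact lt_of_lt_of_le (lt_min (by linarith) ht2) this

lemma mem_osq_of_comp {t : ℝ} (ht : Ff f t ∈ Oset c d) {s : ℝ}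
    (hs : s ∈ Set.Ioo (al c d f t) (be c d f t)) :
    Ff f s ∈ openSquare (pt c d f t).1 (pt c d f t).2 d := by
  by_contra hcon
  rcases le_or_gt s t with h | h
  · have : s ∈ Aset c d f t := Or.inl ⟨h, hcon⟩
    exact absurd (le_csSup (Aset_bdd c d f t) this) (not_le.2 hs.1)
  · have : s ∈ Bset c d f t := Or.inl ⟨h.le, hcon⟩
    exact absurd (csInf_le (Bset_bdd c d f t) this) (not_le.2 hs.2)

lemma mem_Oset_of_comp {t : ℝ} (ht : Ff f t ∈ Oset c d) {s : ℝ}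
    (hs : s ∈ Set.Ioo (al c d f t) (be c d f t)) : Ff f s ∈ Oset c d := by
  have := mem_osq_of_comp c d f ht hs
  exact Set.mem_iUnion₂.2 ⟨pt c d f t, (pt_spec c d f ht).1, this⟩

lemma al_bdry {t : ℝ} (ht : Ff f t ∈ Oset c d) (ht1 : -1 < t) (ht2 : t < 2)
    (hgt : -1 < al c d f t) :
    onBdry (pt c d f t).1 (pt c d f t).2 d (Ff f (al c d f t)) := by
  have halt : al c d f t < t := al_lt c d f ht ht1
  have hnot : Ff f (al c d f t) ∉ openSquare (pt c d f t).1 (pt c d f t).2 d := by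
    rcases al_mem c d f t with ⟨_, h2⟩ | h
    · exact h2
    · rw [Set.mem_singleton_iff] at h; exfalso; rw [h] at hgt; exact lt_irrefl _ hgt
  refine ⟨?_, hnot⟩
  have hcl : Ff f (al c d f t) ∈ closure (openSquare (pt c d f t).1 (pt c d f t).2 d) := by
    have htd : Tendsto (Ff f) (𝓝[>] (al c d f t)) (𝓝 (Ff f (al c d f t))) :=
      ((Ff_cont f).continuousAt).tendsto.mono_left nhdsWithin_le_nhds
    apply mem_closure_of_tendsto htd
    filter_upwards [Ioo_mem_nhdsGT_of_mem (Set.mem_Ico.2 ⟨le_refl _, halt⟩)] with s hs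
    exact mem_osq_of_comp c d f ht ⟨hs.1, lt_trans hs.2 (be_gt c d f ht ht2)⟩
  exact closure_minimal (osq_subset _ _ _) (isClosed_sq _ _ _) hcl

lemma be_bdry {t : ℝ} (ht : Ff f t ∈ Oset c d) (ht1 : -1 < t) (ht2 : t < 2)
    (hlt : be c d f t < 2) :
    onBdry (pt c d f t).1 (pt c d f t).2 d (Ff f (be c d f t)) := by
  have hbet : t < be c d f t := be_gt c d f ht ht2
  have hnot : Ff f (be c d f t) ∉ openSquare (pt c d f t).1 (pt c d f t).2 d := by
    rcases be_mem c d f t with ⟨_, h2⟩ | h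
    · exact h2
    · rw [Set.mem_singleton_iff] at h; exfalso; rw [h] at hlt; exact lt_irrefl _ hlt
  refine ⟨?_, hnot⟩
  have hcl : Ff f (be c d f t) ∈ closure (openSquare (pt c d f t).1 (pt c d f t).2 d) := by
    have htd : Tendsto (Ff f) (𝓝[<] (be c d f t)) (𝓝 (Ff f (be c d f t))) :=
      ((Ff_cont f).continuousAt).tendsto.mono_left nhdsWithin_le_nhds
    apply mem_closure_of_tendsto htd
    filter_upwards [Ioo_mem_nhdsLT_of_mem (Set.mem_Ioc.2 ⟨hbet, le_refl _⟩)] with s hs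
    exact mem_osq_of_comp c d f ht ⟨lt_trans (al_lt c d f ht ht1) hs.1, hs.2⟩
  exact closure_minimal (osq_subset _ _ _) (isClosed_sq _ _ _) hcl

/-- data is constant on components -/
lemma comp_invar {t : ℝ} (hdisj : (c : Set (ℝ × ℝ)).Pairwise fun p q =>
      Disjoint (closedSquare p.1 p.2 d) (closedSquare q.1 q.2 d))
    (ht : Ff f t ∈ Oset c d) (ht1 : -1 < t) (ht2 : t < 2) {s : ℝ}
    (hs : s ∈ Set.Ioo (al c d f t) (be c d f t)) :
    pt c d f s = pt c d f t ∧ al c d f s = al c d f t ∧ be c d f s = be c d f t := by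
  have hsO : Ff f s ∈ Oset c d := mem_Oset_of_comp c d f ht hs
  have hso : Ff f s ∈ openSquare (pt c d f t).1 (pt c d f t).2 d :=
    mem_osq_of_comp c d f ht hs
  have hpt : pt c d f s = pt c d f t := by
    obtain ⟨hsc, hss⟩ := pt_spec c d f hsO
    exact sq_unique c d hdisj hsc (pt_spec c d f ht).1
      (osq_subset _ _ _ hss) (osq_subset _ _ _ hso)
  have haltt : al c d f t < t := al_lt c d f ht ht1
  have hbett : t < be c d f t := be_gt c d f ht ht2
  have hAeq : Aset c d f s = Aset c d f t := by
    unfold Aset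
    rw [hpt]
    ext u
    simp only [Set.mem_union, Set.mem_setOf_eq, Set.mem_singleton_iff]
    constructor
    · rintro (⟨h1, h2⟩ | h)
      · left
        refine ⟨?_, h2⟩
        by_contra hut
        push_neg at hut
        exact h2 (mem_osq_of_comp c d f ht ⟨lt_trans haltt hut, lt_of_le_of_lt h1 hs.2⟩)
      · right; exact h
    · rintro (⟨h1, h2⟩ | h)
      · left
        refine ⟨?_, h2⟩
        by_contra hut
        push_neg at hut
        exact h2 (mem_osq_of_comp c d f ht ⟨lt_trans hs.1 hut, lt_of_le_of_lt h1 hbett⟩)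
      · right; exact h
  have hBeq : Bset c d f s = Bset c d f t := by
    unfold Bset
    rw [hpt]
    ext u
    simp only [Set.mem_union, Set.mem_setOf_eq, Set.mem_singleton_iff]
    constructor
    · rintro (⟨h1, h2⟩ | h)
      · left
        refine ⟨?_, h2⟩
        by_contra hut
        push_neg at hut
        exact h2 (mem_osq_of_comp c d f ht ⟨lt_of_lt_of_le hs.1 h1, lt_trans hut hbett⟩)
      · right; exact h
    · rintro (⟨h1, h2⟩ | h)
      · left
        refine ⟨?_, h2⟩
        by_contra hut
        push_neg at hut
        exact h2 (mem_osq_of_comp c d f ht ⟨lt_of_lt_of_le haltt h1, lt_trans hut hs.2⟩)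
      · right; exact h
  refine ⟨hpt, ?_, ?_⟩
  · unfold al; rw [hAeq]
  · unfold be; rw [hBeq]

/-- left anchor point -/
def xend (t : ℝ) : E :=
  if -1 < al c d f t then Ff f (al c d f t)
  else bpath (pt c d f t).1 (pt c d f t).2 d 0

/-- right anchor point -/
def yend (t : ℝ) : E :=
  if be c d f t < 2 then Ff f (be c d f t)
  else bpath (pt c d f t).1 (pt c d f t).2 d 0

/-- normalized time within the component -/
def sig (t : ℝ) : ℝ := (t - al c d f t) / (be c d f t - al c d f t)

open Classical in
/-- the modified path -/
def G (t : ℝ) : E :=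
  if Ff f t ∈ Oset c d then
    pathAB (pt c d f t).1 (pt c d f t).2 d (xend c d f t) (yend c d f t) (sig c d f t)
  else Ff f t

lemma corner_bdry {a b : ℝ} (hd : 0 < d) : onBdry a b d (bpath a b d 0) :=
  ⟨bpath_mem_sq hd.le _, bpath_not_mem_osq hd ⟨le_refl _, by linarith⟩⟩

lemma xend_bdry (hd : 0 < d) {t : ℝ} (ht : Ff f t ∈ Oset c d) (ht1 : -1 < t) (ht2 : t < 2) :
    onBdry (pt c d f t).1 (pt c d f t).2 d (xend c d f t) := by
  rw [xend]
  split_ifs with h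
  · exact al_bdry c d f ht ht1 ht2 h
  · exact corner_bdry d hd

lemma yend_bdry (hd : 0 < d) {t : ℝ} (ht : Ff f t ∈ Oset c d) (ht1 : -1 < t) (ht2 : t < 2) :
    onBdry (pt c d f t).1 (pt c d f t).2 d (yend c d f t) := by
  rw [yend]
  split_ifs with h
  · exact be_bdry c d f ht ht1 ht2 h
  · exact corner_bdry d hd

lemma sig_mem {t : ℝ} (ht : Ff f t ∈ Oset c d) (ht1 : -1 < t) (ht2 : t < 2) :
    sig c d f t ∈ Set.Ioo (0:ℝ) 1 := by
  have h1 := al_lt c d f ht ht1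
  have h2 := be_gt c d f ht ht2
  unfold sig
  refine Set.mem_Ioo.2 ⟨?_, ?_⟩
  · exact div_pos (by linarith) (by linarith)
  · rw [div_lt_one (by linarith)]; linarith

lemma G_bdry (hd : 0 < d) {t : ℝ} (ht : Ff f t ∈ Oset c d) (ht1 : -1 < t) (ht2 : t < 2) :
    onBdry (pt c d f t).1 (pt c d f t).2 d (G c d f t) := by
  rw [G, if_pos ht]
  exact pathAB_onBdry hd (xend_bdry c d f hd ht ht1 ht2) (yend_bdry c d f hd ht ht1 ht2)
    (Set.mem_Icc_of_Ioo (sig_mem c d f ht ht1 ht2))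

lemma G_dist (hd : 0 < d) {t : ℝ} (ht1 : -1 < t) (ht2 : t < 2) :
    ‖G c d f t - Ff f t‖ ≤ 2 * d := by
  by_cases ht : Ff f t ∈ Oset c d
  · have h1 := (G_bdry c d f hd ht ht1 ht2).1
    have h2 : Ff f t ∈ closedSquare (pt c d f t).1 (pt c d f t).2 d :=
      osq_subset _ _ _ (pt_spec c d f ht).2
    exact sq_diam h1 h2
  · rw [G, if_neg ht, sub_self, norm_zero]; positivity

lemma G_avoid (hd : 0 < d) {B : Set E} (hBO : B ⊆ Oset c d)
    (hdisj : (c : Set (ℝ × ℝ)).Pairwise fun p q =>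
      Disjoint (closedSquare p.1 p.2 d) (closedSquare q.1 q.2 d))
    {t : ℝ} (ht1 : -1 < t) (ht2 : t < 2) : G c d f t ∉ B := by
  intro hmem
  by_cases ht : Ff f t ∈ Oset c d
  · have hb := G_bdry c d f hd ht ht1 ht2
    have : G c d f t ∈ Oset c d := hBO hmem
    rw [Oset, Set.mem_iUnion₂] at this
    obtain ⟨q, hq, hGq⟩ := this
    have : q = pt c d f t :=
      sq_unique c d hdisj hq (pt_spec c d f ht).1 (osq_subset _ _ _ hGq) hb.1
    rw [this] at hGq
    exact hb.2 hGq
  · rw [G, if_neg ht] at hmem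
    exact ht (hBO hmem)

lemma G_eq_on_comp (hd : 0 < d)
    (hdisj : (c : Set (ℝ × ℝ)).Pairwise fun p q =>
      Disjoint (closedSquare p.1 p.2 d) (closedSquare q.1 q.2 d))
    {t : ℝ} (ht : Ff f t ∈ Oset c d) (ht1 : -1 < t) (ht2 : t < 2)
    {s : ℝ} (hs : s ∈ Set.Ioo (al c d f t) (be c d f t)) :
    G c d f s = pathAB (pt c d f t).1 (pt c d f t).2 d (xend c d f t) (yend c d f t)
      ((s - al c d f t) / (be c d f t - al c d f t)) := by
  have hsO : Ff f s ∈ Oset c d := mem_Oset_of_comp c d f ht hs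
  obtain ⟨e1, e2, e3⟩ := comp_invar c d f hdisj ht ht1 ht2 hs
  rw [G, if_pos hsO]
  unfold xend yend sig
  rw [e1, e2, e3]

lemma G_contAt_comp (hd : 0 < d)
    (hdisj : (c : Set (ℝ × ℝ)).Pairwise fun p q =>
      Disjoint (closedSquare p.1 p.2 d) (closedSquare q.1 q.2 d))
    {t : ℝ} (ht : Ff f t ∈ Oset c d) (ht1 : -1 < t) (ht2 : t < 2) :
    ContinuousAt (G c d f) t := by
  have halt := al_lt c d f ht ht1
  have hbet := be_gt c d f ht ht2
  have hsig := sig_mem c d f ht ht1 ht2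
  have hxb := xend_bdry c d f hd ht ht1 ht2
  have hyb := yend_bdry c d f hd ht ht1 ht2
  have hinner : ContinuousAt (fun s : ℝ =>
      (s - al c d f t) / (be c d f t - al c d f t)) t :=
    ((continuous_id.sub continuous_const).div_const _).continuousAt
  have houter : ContinuousAt
      (pathAB (pt c d f t).1 (pt c d f t).2 d (xend c d f t) (yend c d f t))
      ((t - al c d f t) / (be c d f t - al c d f t)) := by
    apply (pathAB_contOn hd hxb hyb).continuousAt
    exact Icc_mem_nhds hsig.1 hsig.2
  have hcont := ContinuousAt.comp (x := t) houter hinner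
  apply hcont.congr
  filter_upwards [isOpen_Ioo.mem_nhds (Set.mem_Ioo.2 ⟨halt, hbet⟩)] with s hs
  exact (G_eq_on_comp c d f hd hdisj ht ht1 ht2 hs).symm

lemma G_contAt (hd : 0 < d)
    (hdisj : (c : Set (ℝ × ℝ)).Pairwise fun p q =>
      Disjoint (closedSquare p.1 p.2 d) (closedSquare q.1 q.2 d))
    {t₀ : ℝ} (ht₀ : t₀ ∈ Set.Icc (0:ℝ) 1) : ContinuousAt (G c d f) t₀ := by
  obtain ⟨ht₀0, ht₀1⟩ := ht₀
  have ht1 : -1 < t₀ := by linarith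
  have ht2 : t₀ < 2 := by linarith
  by_cases hO : Ff f t₀ ∈ Oset c d
  · exact G_contAt_comp c d f hd hdisj hO ht1 ht2
  have tri : ∀ u v w : E, ‖u - w‖ ≤ ‖u - v‖ + ‖v - w‖ := fun u v w => by
    simpa [dist_eq_norm] using dist_triangle u v w
  rw [Metric.continuousAt_iff]
  intro ε hε
  obtain ⟨δ1, hδ1, hF⟩ := Metric.continuousAt_iff.1 (Ff_cont f).continuousAt (ε/20)
    (by linarith)
  set δ1' := min δ1 1 with hδ1'def
  have hδ1'pos : 0 < δ1' := lt_min hδ1 one_pos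
  have hδ1'le : δ1' ≤ δ1 := min_le_left _ _
  have hδ1'le1 : δ1' ≤ 1 := min_le_right _ _
  set δ2 := min (δ1'/4) (δ1' * ε / (32 * (d+1))) with hδ2def
  have hδ2pos : 0 < δ2 := lt_min (by linarith) (by positivity)
  have hδ2a : δ2 ≤ δ1'/4 := min_le_left _ _
  have hδ2b : δ2 ≤ δ1' * ε / (32 * (d+1)) := min_le_right _ _
  have hδ2b' : δ2 * (32 * (d+1)) ≤ δ1' * ε := by
    rw [← le_div_iff₀ (by positivity)]
    exact hδ2b
  have hGt₀ : G c d f t₀ = Ff f t₀ := by rw [G, if_neg hO]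
  refine ⟨δ2, hδ2pos, fun s hdist => ?_⟩
  rw [Real.dist_eq, abs_sub_lt_iff] at hdist
  obtain ⟨hdist1, hdist2⟩ := hdist
  by_cases hsO : Ff f s ∈ Oset c d
  swap
  · rw [hGt₀, G, if_neg hsO]
    have : dist s t₀ < δ1 := by rw [Real.dist_eq, abs_sub_lt_iff]; constructor <;> linarith
    linarith [hF this]
  · have hs1 : -1 < s := by linarith
    have hs2 : s < 2 := by linarith
    have halt := al_lt c d f hsO hs1
    have hbet := be_gt c d f hsO hs2
    have hsig := sig_mem c d f hsO hs1 hs2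
    have hsig' : sig c d f s ∈ Set.Icc (0:ℝ) 1 := Set.mem_Icc_of_Ioo hsig
    have hxb := xend_bdry c d f hd hsO hs1 hs2
    have hyb := yend_bdry c d f hd hsO hs1 hs2
    have hnot : t₀ ∉ Set.Ioo (al c d f s) (be c d f s) := fun hmem =>
      hO (mem_Oset_of_comp c d f hsO hmem)
    rw [Set.mem_Ioo, not_and_or, not_lt, not_lt] at hnot
    rw [hGt₀, G, if_pos hsO, dist_eq_norm]
    set A := al c d f s with hAdef
    set Bb := be c d f s with hBdef
    set σ := sig c d f s with hσdef
    have hσval : σ = (s - A) / (Bb - A) := rfl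
    have hz : (0:ℝ) ∈ Set.Icc (0:ℝ) 1 := by constructor <;> norm_num
    have ho : (1:ℝ) ∈ Set.Icc (0:ℝ) 1 := by constructor <;> norm_num
    rcases hnot with hR | hL
    · -- t₀ ≤ A : component is to the right of t₀
      have hA1 : -1 < A := by linarith
      have hxA : xend c d f s = Ff f A := by rw [xend, if_pos hA1]
      have hAd1 : A - t₀ < δ2 := by linarith
      have hAd2 : t₀ - A < δ2 := by linarith
      have hxF : ‖Ff f A - Ff f t₀‖ < ε/20 := by
        rw [← dist_eq_norm]
        apply hF
        rw [Real.dist_eq, abs_sub_lt_iff]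
        constructor <;> linarith
      by_cases hlen : Bb - A ≤ δ1'/2
      · -- short component
        have hBb2 : Bb < 2 := by linarith
        have hyB : yend c d f s = Ff f Bb := by rw [yend, if_pos hBb2]
        have hyF : ‖Ff f Bb - Ff f t₀‖ < ε/20 := by
          rw [← dist_eq_norm]
          apply hF
          rw [Real.dist_eq, abs_sub_lt_iff]
          constructor <;> linarith
        have hxy : ‖xend c d f s - yend c d f s‖ ≤ ε/10 := by
          rw [hxA, hyB]
          calc ‖Ff f A - Ff f Bb‖ ≤ ‖Ff f A - Ff f t₀‖ + ‖Ff f t₀ - Ff f Bb‖ := tri _ _ _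
            _ ≤ ε/10 := by
                rw [show ‖Ff f t₀ - Ff f Bb‖ = ‖Ff f Bb - Ff f t₀‖ from norm_sub_rev _ _]
                linarith
        calc ‖pathAB (pt c d f s).1 (pt c d f s).2 d (xend c d f s) (yend c d f s) σ - Ff f t₀‖
            ≤ ‖pathAB (pt c d f s).1 (pt c d f s).2 d (xend c d f s) (yend c d f s) σ -
                xend c d f s‖ + ‖xend c d f s - Ff f t₀‖ := tri _ _ _
          _ < ε := by
              have h1 := pathAB_near_x hd hxb hyb hsig'
              rw [hxA] at *
              linarith
      · -- long component
        push_neg at hlen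
        have hσ2 : σ * (δ1'/2) ≤ δ2 := by
          rw [hσval]
          rw [div_mul_eq_mul_div, div_le_iff₀ (by linarith)]
          have hsA : s - A ≤ δ2 := by linarith
          nlinarith [hδ1'pos, hδ2pos]
        have hbd : 8 * d * σ ≤ ε/2 := by
          nlinarith [hσ2, hδ2b', hsig.1.le, hδ1'pos, mul_pos hd hsig.1]
        have h1 : ‖pathAB (pt c d f s).1 (pt c d f s).2 d (xend c d f s) (yend c d f s) σ -
            xend c d f s‖ ≤ 8 * d * σ := by
          have := pathAB_lip hd hxb hyb hsig' hz
          rw [pathAB_zero hd hxb, sub_zero, abs_of_nonneg hsig.1.le] at this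
          exact this
        calc ‖pathAB (pt c d f s).1 (pt c d f s).2 d (xend c d f s) (yend c d f s) σ - Ff f t₀‖
            ≤ ‖pathAB (pt c d f s).1 (pt c d f s).2 d (xend c d f s) (yend c d f s) σ -
                xend c d f s‖ + ‖xend c d f s - Ff f t₀‖ := tri _ _ _
          _ < ε := by rw [hxA] at *; linarith
    · -- Bb ≤ t₀ : component is to the left of t₀
      have hBb2 : Bb < 2 := by linarith
      have hyB : yend c d f s = Ff f Bb := by rw [yend, if_pos hBb2]
      have hBd1 : Bb - t₀ < δ2 := by linarith
      have hBd2 : t₀ - Bb < δ2 := by linarith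
      have hyF : ‖Ff f Bb - Ff f t₀‖ < ε/20 := by
        rw [← dist_eq_norm]
        apply hF
        rw [Real.dist_eq, abs_sub_lt_iff]
        constructor <;> linarith
      by_cases hlen : Bb - A ≤ δ1'/2
      · -- short component
        have hA1 : -1 < A := by linarith
        have hxA : xend c d f s = Ff f A := by rw [xend, if_pos hA1]
        have hxF : ‖Ff f A - Ff f t₀‖ < ε/20 := by
          rw [← dist_eq_norm]
          apply hF
          rw [Real.dist_eq, abs_sub_lt_iff]
          constructor <;> linarith
        have hxy : ‖xend c d f s - yend c d f s‖ ≤ ε/10 := by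
          rw [hxA, hyB]
          calc ‖Ff f A - Ff f Bb‖ ≤ ‖Ff f A - Ff f t₀‖ + ‖Ff f t₀ - Ff f Bb‖ := tri _ _ _
            _ ≤ ε/10 := by
                rw [show ‖Ff f t₀ - Ff f Bb‖ = ‖Ff f Bb - Ff f t₀‖ from norm_sub_rev _ _]
                linarith
        calc ‖pathAB (pt c d f s).1 (pt c d f s).2 d (xend c d f s) (yend c d f s) σ - Ff f t₀‖
            ≤ ‖pathAB (pt c d f s).1 (pt c d f s).2 d (xend c d f s) (yend c d f s) σ -
                yend c d f s‖ + ‖yend c d f s - Ff f t₀‖ := tri _ _ _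
          _ < ε := by
              have h1 := pathAB_near_y hd hxb hyb hsig'
              rw [hyB] at *
              linarith
      · -- long component
        push_neg at hlen
        have hσ2 : (1 - σ) * (δ1'/2) ≤ δ2 := by
          have hne : Bb - A ≠ 0 := ne_of_gt (by linarith)
          have h1σ : 1 - σ = (Bb - s) / (Bb - A) := by
            rw [hσval]
            field_simp
            ring
          rw [h1σ, div_mul_eq_mul_div, div_le_iff₀ (by linarith)]
          have hsB : Bb - s ≤ δ2 := by linarith
          nlinarith [hδ1'pos, hδ2pos]
        have hσle1 : 1 - σ ≥ 0 := by linarith [hsig.2.le]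
        have hbd : 8 * d * (1 - σ) ≤ ε/2 := by
          nlinarith [hσ2, hδ2b', hσle1, hδ1'pos, mul_nonneg hd.le hσle1]
        have h1 : ‖pathAB (pt c d f s).1 (pt c d f s).2 d (xend c d f s) (yend c d f s) σ -
            yend c d f s‖ ≤ 8 * d * (1 - σ) := by
          have := pathAB_lip hd hxb hyb hsig' ho
          rw [pathAB_one hd hyb, show |σ - 1| = 1 - σ by
            rw [abs_sub_comm, abs_of_nonneg hσle1]] at this
          exact this
        calc ‖pathAB (pt c d f s).1 (pt c d f s).2 d (xend c d f s) (yend c d f s) σ - Ff f t₀‖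
            ≤ ‖pathAB (pt c d f s).1 (pt c d f s).2 d (xend c d f s) (yend c d f s) σ -
                yend c d f s‖ + ‖yend c d f s - Ff f t₀‖ := tri _ _ _
          _ < ε := by rw [hyB] at *; linarith



lemma approx (hd : 0 < d)
    (hdisj : (c : Set (ℝ × ℝ)).Pairwise fun p q =>
      Disjoint (closedSquare p.1 p.2 d) (closedSquare q.1 q.2 d))
    (B : Set E) (hB : B ⊆ interior (⋃ p ∈ c, closedSquare p.1 p.2 d)) :
    ∃ g : C(unitInterval, E), (∀ t : unitInterval, ‖g t - f t‖ ≤ 2 * d) ∧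
      ∀ t : unitInterval, g t ∉ B := by
  have hBO : B ⊆ Oset c d := by
    rw [← interior_union_eq c d hdisj]
    exact hB
  have hcont : Continuous (fun t : unitInterval => G c d f (t : ℝ)) := by
    rw [continuous_iff_continuousAt]
    intro t
    exact (G_contAt c d f hd hdisj t.2).comp continuous_subtype_val.continuousAt
  refine ⟨⟨_, hcont⟩, fun t => ?_, fun t => ?_⟩
  · have h1 : -1 < (t:ℝ) := by linarith [t.2.1]
    have h2 : (t:ℝ) < 2 := by linarith [t.2.2]
    have h := G_dist c d f hd h1 h2
    rw [Ff_coe f t] at h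
    simpa using h
  · have h1 : -1 < (t:ℝ) := by linarith [t.2.1]
    have h2 : (t:ℝ) < 2 := by linarith [t.2.2]
    exact G_avoid c d f hd hBO hdisj h1 h2

end Construction

lemma side_pos {c : Finset (ℝ × ℝ)} {d : ℝ} {x₀ : E}
    (hx : x₀ ∈ interior (⋃ p ∈ c, closedSquare p.1 p.2 d)) : 0 < d := by
  classical
  by_contra hcon
  push_neg at hcon
  obtain ⟨ε, hε, hball⟩ := Metric.mem_nhds_iff.1 (mem_interior_iff_mem_nhds.1 hx)
  have hmem : ∀ t ∈ Set.Ioo (0:ℝ) ε, ∃ p ∈ c,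
      x₀ + t • EuclideanSpace.single (0 : Fin 2) (1:ℝ) ∈ closedSquare p.1 p.2 d := by
    intro t ht
    have hb : x₀ + t • EuclideanSpace.single (0 : Fin 2) (1:ℝ) ∈ Metric.ball x₀ ε := by
      rw [Metric.mem_ball, dist_eq_norm, add_sub_cancel_left, norm_smul,
        EuclideanSpace.norm_single, norm_one, mul_one, Real.norm_eq_abs,
        abs_of_pos ht.1]
      exact ht.2
    obtain ⟨p, hp, hm⟩ := Set.mem_iUnion₂.1 (hball hb)
    exact ⟨p, hp, hm⟩
  set ch : ℝ → ℝ × ℝ := fun t =>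
    if h : ∃ p ∈ c, x₀ + t • EuclideanSpace.single (0 : Fin 2) (1:ℝ) ∈
        closedSquare p.1 p.2 d then h.choose else (0,0) with hch
  have hspec : ∀ t ∈ Set.Ioo (0:ℝ) ε, ch t ∈ c ∧
      x₀ + t • EuclideanSpace.single (0 : Fin 2) (1:ℝ) ∈
        closedSquare (ch t).1 (ch t).2 d := by
    intro t ht
    have h := hmem t ht
    rw [hch]
    simp only [dif_pos h]
    exact ⟨h.choose_spec.1, h.choose_spec.2⟩
  have hmap : Set.MapsTo ch (Set.Ioo 0 ε) (c : Set (ℝ × ℝ)) :=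
    fun t ht => (hspec t ht).1
  obtain ⟨t, ht, t', ht', hne, heq⟩ :=
    (Set.Ioo_infinite hε).exists_ne_map_eq_of_mapsTo hmap c.finite_toSet
  have h1 := (hspec t ht).2
  have h2 := (hspec t' ht').2
  rw [heq] at h1
  have e0 : ∀ u : ℝ, (x₀ + u • EuclideanSpace.single (0 : Fin 2) (1:ℝ)) 0 = x₀ 0 + u := by
    intro u; simp [EuclideanSpace.single_apply]
  have c1 := h1.1
  have c2 := h2.1
  rw [e0] at c1 c2
  simp only [Set.mem_Icc] at c1 c2
  exact hne (by linarith [c1.1, c1.2, c2.1, c2.2] : t = t')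

end SP

/-- The stopping map `Φ` for a carpet-type set `B = ⋂ₙ Bₙ` is discontinuous at every
`f` with `τ(f) < 1` and `Φ(f) ≠ f`: there is a sequence `gₙ → f` uniformly consisting
of fixed points of `Φ`, so `Φ(gₙ) → f ≠ Φ(f)`. -/
theorem stopMap_discontinuous_at_carpet
    (Bseq : ℕ → Set (EuclideanSpace ℝ (Fin 2))) (dseq : ℕ → ℝ)
    (hsq : ∀ n, 1 ≤ n → IsSquareUnion (Bseq n) (dseq n))
    (hnest : ∀ n, 1 ≤ n → Bseq (n + 1) ⊆ interior (Bseq n))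
    (hd : Tendsto dseq atTop (𝓝 0))
    (B : Set (EuclideanSpace ℝ (Fin 2))) (hB : B = ⋂ n ∈ {n : ℕ | 1 ≤ n}, Bseq n)
    (hBclosed : IsClosed B)
    (f : C(unitInterval, EuclideanSpace ℝ (Fin 2)))
    (hτ : hitTime B f < 1) (hne : stopMap B f ≠ f) :
    (∃ g : ℕ → C(unitInterval, EuclideanSpace ℝ (Fin 2)),
      Tendsto (fun n => ‖g n - f‖) atTop (𝓝 0) ∧ ∀ n, stopMap B (g n) = g n) ∧
      ¬ ContinuousAt (stopMap B) f := by
  classical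
  -- B is nonempty since the path hits it before time 1
  have hBne : ∃ x₀, x₀ ∈ B := by
    obtain ⟨a, ha, halt⟩ := exists_lt_of_csInf_lt
      (⟨1, Or.inr rfl⟩ : ({t : ℝ | ∃ ht : t ∈ Set.Icc (0 : ℝ) 1, f ⟨t, ht⟩ ∈ B} ∪ {1}).Nonempty) hτ
    rcases ha with ha | ha
    · obtain ⟨hIcc, hmem⟩ := ha
      exact ⟨_, hmem⟩
    · rw [Set.mem_singleton_iff] at ha
      exact absurd (ha ▸ halt) (lt_irrefl 1)
  obtain ⟨x₀, hx₀⟩ := hBne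
  have hBsub : ∀ n, 1 ≤ n → B ⊆ Bseq n := fun n hn =>
    hB ▸ Set.biInter_subset_of_mem hn
  have hBint : ∀ n, 1 ≤ n → B ⊆ interior (Bseq n) := fun n hn =>
    (hBsub (n+1) (by omega)).trans (hnest n hn)
  have hdpos : ∀ n, 1 ≤ n → 0 < dseq n := by
    intro n hn
    obtain ⟨c, hceq, hcdisj⟩ := hsq n hn
    have hx : x₀ ∈ interior (⋃ p ∈ c, closedSquare p.1 p.2 (dseq n)) := by
      rw [← hceq]
      exact hBint n hn hx₀
    exact SP.side_pos hx
  have key : ∀ k : ℕ, ∃ g : C(unitInterval, E),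
      (∀ t, ‖g t - f t‖ ≤ 1/((k:ℝ)+1)) ∧ ∀ t, g t ∉ B := by
    intro k
    obtain ⟨N, hN⟩ := Metric.tendsto_atTop.1 hd (1/(2*((k:ℝ)+1))) (by positivity)
    set n := max N 1 with hn
    have hn1 : 1 ≤ n := le_max_right _ _
    have hdn : |dseq n| < 1/(2*((k:ℝ)+1)) := by
      have := hN n (le_max_left _ _)
      rwa [Real.dist_eq, sub_zero] at this
    have hdn' : 2 * dseq n ≤ 1/((k:ℝ)+1) := by
      have h1 := hdpos n hn1
      rw [abs_of_pos h1] at hdn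
      have h2 : (1:ℝ)/(2*((k:ℝ)+1)) * 2 = 1/((k:ℝ)+1) := by
        field_simp
      nlinarith
    obtain ⟨c, hceq, hcdisj⟩ := hsq n hn1
    obtain ⟨g, hg1, hg2⟩ := SP.approx c (dseq n) f (hdpos n hn1) hcdisj B
      (by rw [← hceq]; exact hBint n hn1)
    exact ⟨g, fun t => le_trans (hg1 t) hdn', hg2⟩
  choose g hg1 hg2 using key
  have hfix : ∀ k, stopMap B (g k) = g k := by
    intro k
    have hempty : {t : ℝ | ∃ ht : t ∈ Set.Icc (0:ℝ) 1, (g k) ⟨t, ht⟩ ∈ B} = ∅ := by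
      ext t
      simp only [Set.mem_setOf_eq, Set.mem_empty_iff_false, iff_false, not_exists]
      intro ht hmem
      exact hg2 k ⟨t, ht⟩ hmem
    have hhit : hitTime B (g k) = 1 := by
      rw [hitTime, hempty, Set.empty_union, csInf_singleton]
    ext t
    simp only [stopMap, ContinuousMap.coe_mk]
    rw [hhit, min_eq_left t.2.2]
    simp
  have hnorm : ∀ k, ‖g k - f‖ ≤ 1/((k:ℝ)+1) := by
    intro k
    apply (ContinuousMap.norm_le _ (by positivity)).2
    intro t
    rw [ContinuousMap.sub_apply]
    exact hg1 k t
  have htend0 : Tendsto (fun k => ‖g k - f‖) atTop (𝓝 0) :=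
    squeeze_zero (fun k => norm_nonneg _) hnorm tendsto_one_div_add_atTop_nhds_zero_nat
  refine ⟨⟨g, htend0, hfix⟩, ?_⟩
  intro hcont
  have h1 : Tendsto g atTop (𝓝 f) := tendsto_iff_norm_sub_tendsto_zero.2 htend0
  have h2 : Tendsto (fun k => stopMap B (g k)) atTop (𝓝 (stopMap B f)) :=
    (hcont.tendsto).comp h1
  have h3 : Tendsto g atTop (𝓝 (stopMap B f)) := h2.congr fun k => hfix k
  exact hne (tendsto_nhds_unique h3 h1)

end
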